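/- (Butterfly access count) Let k ≥ 2 be an integer and j ∈ {0,…,k−1}. Then the set {i ⊕ (2^j − 1) : i ∈ {0,…,2^{k−1}−1}, i(j) ≠ i(j−1)} is contained in {0,…,2^{k−1}−1} and has exactly 2^{k−2} elements. -/

import Mathlib

/-- The `j`-th bit of `i` (`j ≥ 0`). -/
def bitp (i j : ℕ) : Bool := i.testBit j

/-- The `(j-1)`-th bit of `i`, with the convention that the bit at position `-1` is `0`. -/
def bitm (i j : ℕ) : Bool := if j = 0 then false else i.testBit (j - 1)

/-- `i` is dark in column `j` iff `i(j) = i(j-1)`. -/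
def dark (i j : ℕ) : Prop := bitp i j = bitm i j

instance (i j : ℕ) : Decidable (dark i j) := by unfold dark; infer_instance

/-- `ℓ_{i,j} = i ⊕ (2^j - 1)`. -/
def ell (i j : ℕ) : ℕ := i ^^^ (2 ^ j - 1)

/-- The set `B_{i,j}`. -/
def Bset (k i j : ℕ) : Finset (ℕ × ℕ) :=
  if dark i j then
    ((Finset.range k).filter
        (fun j' : ℕ => ((j : ℤ) - (j' : ℤ)) % (k : ℤ) ≤ ((k / 2 : ℕ) : ℤ))).image
      (fun j' => (i, j'))
  else {(i, j)}

/-- The butterfly support set `B_i = ⋃_{j ∈ [k]} B_{ℓ_{i,j}, j}`. -/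
def Bline (k i : ℕ) : Finset (ℕ × ℕ) :=
  (Finset.range k).biUnion (fun j => Bset k (ell i j) j)

/-- Horizontal parity `h_i(a)`. -/
def hpar (k : ℕ) (a : ℕ → ℕ → ZMod 2) (i : ℕ) : ZMod 2 :=
  ∑ j ∈ Finset.range k, a i j

/-- Butterfly parity `b_i(a)`. -/
def bpar (k : ℕ) (a : ℕ → ℕ → ZMod 2) (i : ℕ) : ZMod 2 :=
  ∑ p ∈ Bline k i, a p.1 p.2

/-- Butterfly access count: the set `{i ⊕ (2^j - 1) : i < 2^(k-1), i(j) ≠ i(j-1)}` is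
contained in `{0,…,2^(k-1)-1}` and has exactly `2^(k-2)` elements. -/
lemma flip_dark (j i : ℕ) : dark (i ^^^ 2 ^ (j - 1)) j ↔ ¬ dark i j := by
  unfold dark bitp bitm
  rcases Nat.eq_zero_or_pos j with rfl | hj
  · simp [Nat.testBit_xor]; omega
  · have h0 : j ≠ 0 := by omega
    have hne : j - 1 ≠ j := by omega
    simp [Nat.testBit_xor, Nat.testBit_two_pow, hne, h0, Ne.symm hne]
    cases h1 : i.testBit j <;> cases h2 : i.testBit (j-1) <;> simp

theorem butterfly_access_count (k : ℕ) (hk : 2 ≤ k) (j : ℕ) (hj : j < k) :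
    (((Finset.range (2 ^ (k - 1))).filter (fun i => ¬ dark i j)).image (fun i => ell i j))
        ⊆ Finset.range (2 ^ (k - 1)) ∧
    (((Finset.range (2 ^ (k - 1))).filter (fun i => ¬ dark i j)).image
        (fun i => ell i j)).card = 2 ^ (k - 2) := by
  have h2 : (0:ℕ) < 2 := by norm_num
  have hc : 2 ^ j - 1 < 2 ^ (k - 1) := by
    have h1 : 2 ^ j ≤ 2 ^ (k - 1) ∨ j = k - 1 + 0 ∨ True := by tauto
    have hle : (2:ℕ) ^ j ≤ 2 ^ (k - 1) ∨ 2 ^ j - 1 < 2 ^ (k-1) := by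
      left; exact Nat.pow_le_pow_right h2 (by omega)
    have : 0 < 2 ^ j := Nat.pow_pos h2
    omega
  constructor
  · intro x hx
    simp only [Finset.mem_image, Finset.mem_filter, Finset.mem_range] at hx ⊢
    obtain ⟨i, ⟨hi, _⟩, rfl⟩ := hx
    exact Nat.xor_lt_two_pow hi hc
  · have hinj : Function.Injective (fun i => ell i j) := by
      intro a b h
      have := congrArg (fun x => x ^^^ (2 ^ j - 1)) h
      simpa [ell, Nat.xor_assoc] using this
    rw [Finset.card_image_of_injective _ hinj]
    -- bijection between dark and not-dark parts
    have hm : 2 ^ (j - 1) < 2 ^ (k - 1) := Nat.pow_lt_pow_right (by norm_num) (by omega)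
    have key : ((Finset.range (2 ^ (k - 1))).filter (fun i => ¬ dark i j)).card
        = ((Finset.range (2 ^ (k - 1))).filter (fun i => dark i j)).card := by
      apply Finset.card_nbij' (fun i => i ^^^ 2 ^ (j - 1)) (fun i => i ^^^ 2 ^ (j - 1))
      · intro a ha
        simp only [Finset.coe_filter, Set.mem_setOf_eq, Finset.mem_coe, Finset.mem_filter, Finset.mem_range] at ha ⊢
        exact ⟨Nat.xor_lt_two_pow ha.1 hm, (flip_dark j a).mpr ha.2⟩
      · intro a ha
        simp only [Finset.coe_filter, Set.mem_setOf_eq, Finset.mem_coe, Finset.mem_filter, Finset.mem_range] at ha ⊢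
        exact ⟨Nat.xor_lt_two_pow ha.1 hm,
          (flip_dark j a).not.mpr (not_not.mpr ha.2)⟩
      · intro a _; simp [Nat.xor_assoc]
      · intro a _; simp [Nat.xor_assoc]
    have hsum := Finset.card_filter_add_card_filter_not
      (s := Finset.range (2 ^ (k - 1))) (p := fun i => dark i j)
    rw [Finset.card_range] at hsum
    have hpow : 2 ^ (k - 1) = 2 * 2 ^ (k - 2) := by
      rw [← pow_succ']
      congr 1; omega
    omega
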